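/- arXiv:2504.13620 — 8 statements merged into one kernel-verified Lean document; each statement's English description precedes it below -/
import Mathlib

section
/- Proposition 2.3(v) (conditional translation equivariance): Let Ω and F be nonempty standard Borel spaces, μ a probability measure on Ω, Z : Ω → F measurable, X : Ω → ℝ measurable, and f : F → ℝ measurable. Then for μ-almost every ω, condDistrib (fun ω' => X ω' + f (Z ω')) Z μ (Z ω) = (condDistrib X Z μ (Z ω)).map (fun t => t + f (Z ω)). Consequently, if T : Measure ℝ → EReal satisfies T (ν.map (fun t => t + c)) = T ν + (c : EReal) for every probability measure ν on ℝ and every c ∈ ℝ, then T (condDistrib (fun ω' => X ω' + f (Z ω')) Z μ (Z ω)) = T (condDistrib X Z μ (Z ω)) + (f (Z ω) : EReal) for μ-almost every ω. -/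
open MeasureTheory ProbabilityTheory

/-- Proposition 2.3(v): conditional translation equivariance. -/
theorem condDistrib_add_and_gauge_translation_equivariant
    {Ω F : Type*} [MeasurableSpace Ω] [StandardBorelSpace Ω] [Nonempty Ω]
    [MeasurableSpace F] [StandardBorelSpace F] [Nonempty F]
    (μ : Measure Ω) [IsProbabilityMeasure μ]
    (Z : Ω → F) (hZ : Measurable Z) (X : Ω → ℝ) (hX : Measurable X)
    (f : F → ℝ) (hf : Measurable f) :
    (∀ᵐ ω ∂μ, condDistrib (fun ω' => X ω' + f (Z ω')) Z μ (Z ω)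
        = (condDistrib X Z μ (Z ω)).map (fun t => t + f (Z ω))) ∧
      ∀ T : Measure ℝ → EReal,
        (∀ (ν : Measure ℝ), IsProbabilityMeasure ν → ∀ c : ℝ,
          T (ν.map (fun t => t + c)) = T ν + (c : EReal)) →
        ∀ᵐ ω ∂μ, T (condDistrib (fun ω' => X ω' + f (Z ω')) Z μ (Z ω))
          = T (condDistrib X Z μ (Z ω)) + (f (Z ω) : EReal) := by
  -- auxiliary data
  set κ₀ : Kernel F ℝ := condDistrib X Z μ with hκ₀
  have hg : Measurable (fun p : F × ℝ => p.2 + f p.1) :=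
    measurable_snd.add (hf.comp measurable_fst)
  -- the candidate kernel
  set κ : Kernel F ℝ := Kernel.map (Kernel.id ×ₖ κ₀) (fun p : F × ℝ => p.2 + f p.1) with hκ
  have hκapp : ∀ z, κ z = (κ₀ z).map (fun t => t + f z) := by
    intro z
    rw [hκ, Kernel.map_apply _ hg, Kernel.prod_apply, Kernel.id_apply,
      Measure.dirac_prod, Measure.map_map hg (measurable_prodMk_left)]
    rfl
  -- disintegration of the pair (Z, X)
  have hdis : μ.map (fun ω => (Z ω, X ω)) = μ.map Z ⊗ₘ κ₀ := by
    have h := Measure.disintegrate (μ.map fun ω => (Z ω, X ω))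
      ((μ.map fun ω => (Z ω, X ω)).condKernel)
    rw [Measure.fst_map_prodMk hX] at h
    rw [hκ₀, condDistrib]
    exact h.symm
  -- key computation: μ.map (Z, X + f ∘ Z) = μ.map Z ⊗ₘ κ
  have hXf : Measurable fun ω => X ω + f (Z ω) := hX.add (hf.comp hZ)
  have hcomp : μ.map (fun ω => (Z ω, X ω + f (Z ω))) = μ.map Z ⊗ₘ κ := by
    have h1 : μ.map (fun ω => (Z ω, X ω + f (Z ω)))
        = (μ.map (fun ω => (Z ω, X ω))).map
          (fun p : F × ℝ => (p.1, p.2 + f p.1)) := by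
      rw [Measure.map_map (measurable_fst.prodMk hg) (hZ.prodMk hX)]
      rfl
    rw [h1, hdis]
    ext s hs
    rw [Measure.map_apply (measurable_fst.prodMk hg) hs,
      Measure.compProd_apply ((measurable_fst.prodMk hg) hs),
      Measure.compProd_apply hs]
    refine lintegral_congr fun z => ?_
    rw [hκapp z, Measure.map_apply (measurable_add_const _) (measurable_prodMk_left hs)]
    rfl
  -- a.e. equality of kernels
  have hae : ∀ᵐ z ∂μ.map Z, κ z = condDistrib (fun ω' => X ω' + f (Z ω')) Z μ z :=
    (condDistrib_ae_eq_of_measure_eq_compProd_of_measurable hZ hXf hcomp).mono fun z h => h.symm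
  have hae' : ∀ᵐ ω ∂μ, condDistrib (fun ω' => X ω' + f (Z ω')) Z μ (Z ω)
      = (condDistrib X Z μ (Z ω)).map (fun t => t + f (Z ω)) := by
    filter_upwards [ae_of_ae_map hZ.aemeasurable hae] with ω h
    rw [← h, hκapp]
  refine ⟨hae', fun T hT => ?_⟩
  filter_upwards [hae'] with ω h
  rw [h, hT _ (IsMarkovKernel.isProbabilityMeasure _) (f (Z ω))]
end

section
/- Theorem 4.3 (G2), unconditional form (constant preservation of the set-valued gauge): Let E be a finite-dimensional real inner product space, (Ω, μ) a probability space, and g : (Ω → EReal) → EReal a functional with g (fun _ => c) = c for every c ∈ EReal. If X : Ω → Set E is the constant map X ω = F for a nonempty closed convex set F ⊆ E, then G(X) = F, i.e. ⋂_{w ∈ sphere 0 1} {x ∈ E : (⟪x, w⟫ : EReal) ≤ g (fun ω => h (X ω) w)} = F. -/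
open MeasureTheory RealInnerProductSpace

/-- The support function of a set `A ⊆ E` in direction `w`, with values in the
extended reals (equal to `⊥` for `A = ∅`). -/
noncomputable def suppFn {E : Type*} [NormedAddCommGroup E] [InnerProductSpace ℝ E]
    (A : Set E) (w : E) : EReal :=
  ⨆ x ∈ A, ((⟪x, w⟫ : ℝ) : EReal)

/-- The unconditional set-valued gauge of a set-valued map `X`, for a functional `g`. -/
def gaugeSet {E : Type*} [NormedAddCommGroup E] [InnerProductSpace ℝ E]
    {Ω : Type*} (g : (Ω → EReal) → EReal) (X : Ω → Set E) : Set E :=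
  ⋂ w ∈ Metric.sphere (0 : E) 1,
    {x : E | ((⟪x, w⟫ : ℝ) : EReal) ≤ g (fun ω => suppFn (X ω) w)}

/-- Theorem 4.3 (G2), unconditional form: the set-valued gauge of a deterministic
nonempty closed convex set is that set. -/
theorem gaugeSet_const
    {E : Type*} [NormedAddCommGroup E] [InnerProductSpace ℝ E] [FiniteDimensional ℝ E]
    {Ω : Type*} [MeasurableSpace Ω] (μ : Measure Ω) [IsProbabilityMeasure μ]
    (g : (Ω → EReal) → EReal) (hg : ∀ c : EReal, g (fun _ => c) = c)
    (F : Set E) (hFne : F.Nonempty) (hFcl : IsClosed F) (hFconv : Convex ℝ F) :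
    gaugeSet g (fun _ : Ω => F) = F := by
  apply Set.Subset.antisymm
  · intro x hx
    by_contra hxF
    obtain ⟨f, u, hfa, hux⟩ := geometric_hahn_banach_closed_point hFconv hFcl hxF
    set v := (InnerProductSpace.toDual ℝ E).symm f with hv
    have hfv : ∀ y : E, ⟪v, y⟫ = f y := fun y =>
      InnerProductSpace.toDual_symm_apply
    obtain ⟨a, ha⟩ := hFne
    have hvne : v ≠ 0 := by
      intro h0
      have h1 : f a = 0 := by rw [← hfv a, h0, inner_zero_left]
      have h2 : f x = 0 := by rw [← hfv x, h0, inner_zero_left]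
      have := (hfa a ha).trans hux
      rw [h1, h2] at this
      exact lt_irrefl _ this
    have hvpos : (0 : ℝ) < ‖v‖ := norm_pos_iff.mpr hvne
    set w : E := ‖v‖⁻¹ • v with hw
    have hwsph : w ∈ Metric.sphere (0 : E) 1 := by
      simp only [Metric.mem_sphere, dist_zero_right, hw, norm_smul, norm_inv,
        norm_norm]
      field_simp
    have hinner : ∀ y : E, ⟪y, w⟫ = ‖v‖⁻¹ * f y := by
      intro y
      rw [hw, real_inner_smul_right, real_inner_comm, hfv]
    have hxw : ((⟪x, w⟫ : ℝ) : EReal) ≤ g (fun _ => suppFn F w) :=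
      Set.mem_iInter₂.mp hx w hwsph
    rw [hg] at hxw
    have hsup : suppFn F w ≤ ((‖v‖⁻¹ * u : ℝ) : EReal) := by
      refine iSup₂_le fun y hy => ?_
      rw [hinner y]
      exact_mod_cast mul_le_mul_of_nonneg_left (hfa y hy).le (inv_nonneg.mpr hvpos.le)
    have hlt : ((‖v‖⁻¹ * u : ℝ) : EReal) < ((⟪x, w⟫ : ℝ) : EReal) := by
      rw [hinner x]
      exact_mod_cast mul_lt_mul_of_pos_left hux (inv_pos.mpr hvpos)
    exact absurd (hxw.trans hsup) (not_le.mpr hlt)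
  · intro x hx
    refine Set.mem_iInter₂.mpr fun w hw => ?_
    show ((⟪x, w⟫ : ℝ) : EReal) ≤ g (fun _ => suppFn F w)
    rw [hg]
    exact le_iSup₂ (f := fun y (_ : y ∈ F) => ((⟪y, w⟫ : ℝ) : EReal)) x hx
end

section
/- Theorem 4.3 (G3), unconditional form (equivariance of the set-valued gauge under invertible linear maps): Let E be a finite-dimensional real inner product space, (Ω, μ) a probability space, and g : (Ω → EReal) → EReal positively homogeneous, i.e. g (fun ω => (c : EReal) * f ω) = (c : EReal) * g f for every real c > 0 and every f : Ω → EReal. Then for every linear equivalence Γ : E ≃ₗ[ℝ] E and every set-valued map X : Ω → Set E, G(fun ω => Γ '' (X ω)) = Γ '' G(X). -/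
open MeasureTheory RealInnerProductSpace

lemma ereal_mul_left_cancel (c : ℝ) (hc : 0 < c) (a : EReal) :
    ((c⁻¹ : ℝ) : EReal) * ((c : EReal) * a) = a := by
  rw [← mul_assoc, ← EReal.coe_mul, inv_mul_cancel₀ hc.ne', EReal.coe_one, one_mul]

noncomputable def erealMulPosOrderIso (c : ℝ) (hc : 0 < c) : EReal ≃o EReal where
  toFun a := (c : EReal) * a
  invFun a := ((c⁻¹ : ℝ) : EReal) * a
  left_inv a := ereal_mul_left_cancel c hc a
  right_inv a := by
    have := ereal_mul_left_cancel c⁻¹ (inv_pos.2 hc) a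
    rwa [inv_inv] at this
  map_rel_iff' := by
    intro a b
    simp only [Equiv.coe_fn_mk]
    constructor
    · intro h
      have h2 := mul_le_mul_of_nonneg_left h
        (by exact_mod_cast (inv_pos.2 hc).le : (0:EReal) ≤ ((c⁻¹:ℝ):EReal))
      rwa [ereal_mul_left_cancel c hc, ereal_mul_left_cancel c hc] at h2
    · intro h
      exact mul_le_mul_of_nonneg_left h (by exact_mod_cast hc.le)

lemma ereal_mul_le_mul_left_iff (c : ℝ) (hc : 0 < c) (a b : EReal) :
    (c : EReal) * a ≤ (c : EReal) * b ↔ a ≤ b :=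
  (erealMulPosOrderIso c hc).map_rel_iff

lemma ereal_mul_iSup {ι : Sort*} (c : ℝ) (hc : 0 < c) (f : ι → EReal) :
    (c : EReal) * ⨆ i, f i = ⨆ i, (c : EReal) * f i :=
  (erealMulPosOrderIso c hc).map_iSup f

lemma suppFn_smul {E : Type*} [NormedAddCommGroup E] [InnerProductSpace ℝ E]
    (A : Set E) (c : ℝ) (hc : 0 < c) (w : E) :
    suppFn A (c • w) = (c : EReal) * suppFn A w := by
  unfold suppFn
  rw [ereal_mul_iSup c hc]
  refine iSup_congr fun x => ?_
  rw [ereal_mul_iSup c hc]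
  refine iSup_congr fun _ => ?_
  rw [real_inner_smul_right, EReal.coe_mul]

lemma suppFn_image {E : Type*} [NormedAddCommGroup E] [InnerProductSpace ℝ E]
    [FiniteDimensional ℝ E] (A : Set E) (Γ : E ≃ₗ[ℝ] E) (w : E) :
    suppFn (Γ '' A) w = suppFn A (LinearMap.adjoint (Γ : E →ₗ[ℝ] E) w) := by
  unfold suppFn
  rw [iSup_image]
  refine iSup_congr fun x => iSup_congr fun _ => ?_
  congr 1
  rw [LinearMap.adjoint_inner_right]
  rfl

lemma mem_gaugeSet_iff {E : Type*} [NormedAddCommGroup E] [InnerProductSpace ℝ E]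
    {Ω : Type*} (g : (Ω → EReal) → EReal) (X : Ω → Set E) (x : E) :
    x ∈ gaugeSet g X ↔
      ∀ w : E, ‖w‖ = 1 → ((⟪x, w⟫ : ℝ) : EReal) ≤ g (fun ω => suppFn (X ω) w) := by
  simp [gaugeSet]

/-- Theorem 4.3 (G3), unconditional form: for a positively homogeneous functional `g`,
the set-valued gauge is equivariant under invertible linear maps. -/
theorem gaugeSet_linear_equivariant
    {E : Type*} [NormedAddCommGroup E] [InnerProductSpace ℝ E] [FiniteDimensional ℝ E]
    {Ω : Type*} [MeasurableSpace Ω] (μ : Measure Ω) [IsProbabilityMeasure μ]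
    (g : (Ω → EReal) → EReal)
    (hg : ∀ (c : ℝ), 0 < c → ∀ f : Ω → EReal,
      g (fun ω => (c : EReal) * f ω) = (c : EReal) * g f)
    (Γ : E ≃ₗ[ℝ] E) (X : Ω → Set E) :
    gaugeSet g (fun ω => Γ '' (X ω)) = Γ '' gaugeSet g X := by
  classical
  set A : E →ₗ[ℝ] E := LinearMap.adjoint (Γ : E →ₗ[ℝ] E) with hA
  set B : E →ₗ[ℝ] E := LinearMap.adjoint (Γ.symm : E →ₗ[ℝ] E) with hB
  have hAB : ∀ v : E, A (B v) = v := by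
    intro v
    refine ext_inner_left ℝ fun u => ?_
    rw [hA, hB, LinearMap.adjoint_inner_right, LinearMap.adjoint_inner_right]
    simp
  have hBA : ∀ v : E, B (A v) = v := by
    intro v
    refine ext_inner_left ℝ fun u => ?_
    rw [hA, hB, LinearMap.adjoint_inner_right, LinearMap.adjoint_inner_right]
    simp
  have hAne : ∀ w : E, w ≠ 0 → A w ≠ 0 := by
    intro w hw h
    apply hw
    rw [← hBA w, h, map_zero]
  -- key characterization
  ext x
  rw [mem_gaugeSet_iff]
  constructor
  · rintro h
    refine ⟨Γ.symm x, (mem_gaugeSet_iff g X _).2 fun v hv => ?_, by simp⟩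
    -- use w := ‖B v‖⁻¹ • B v
    have hvne : v ≠ 0 := by intro h0; rw [h0] at hv; simp at hv
    have hBvne : B v ≠ 0 := by
      intro h0; apply hvne; rw [← hAB v, h0, map_zero]
    set c : ℝ := ‖B v‖ with hc
    have hcpos : 0 < c := norm_pos_iff.2 hBvne
    set w : E := c⁻¹ • B v with hw
    have hwnorm : ‖w‖ = 1 := by
      rw [hw, norm_smul, norm_inv, norm_norm, ← hc, inv_mul_cancel₀ hcpos.ne']
    have key := h w hwnorm
    have hAw : A w = c⁻¹ • v := by rw [hw, _root_.map_smul, hAB]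
    have hsupp : ∀ ω, suppFn (Γ '' X ω) w = ((c⁻¹ : ℝ) : EReal) * suppFn (X ω) v := by
      intro ω
      rw [suppFn_image, ← hA, hAw, suppFn_smul _ _ (inv_pos.2 hcpos)]
    have hginner : (fun ω => suppFn (Γ '' X ω) w)
        = fun ω => ((c⁻¹ : ℝ) : EReal) * suppFn (X ω) v := funext hsupp
    rw [hginner, hg c⁻¹ (inv_pos.2 hcpos)] at key
    have hinner : ⟪x, w⟫ = c⁻¹ * ⟪Γ.symm x, v⟫ := by
      rw [hw, real_inner_smul_right]
      congr 1
      rw [hB, LinearMap.adjoint_inner_right]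
      rfl
    rw [hinner, EReal.coe_mul] at key
    exact (ereal_mul_le_mul_left_iff c⁻¹ (inv_pos.2 hcpos) _ _).1 key
  · rintro ⟨y, hy, rfl⟩
    rw [mem_gaugeSet_iff] at hy
    intro w hw
    have hwne : w ≠ 0 := by intro h0; rw [h0] at hw; simp at hw
    have hAwne : A w ≠ 0 := hAne w hwne
    set c : ℝ := ‖A w‖ with hc
    have hcpos : 0 < c := norm_pos_iff.2 hAwne
    set v : E := c⁻¹ • A w with hv
    have hvnorm : ‖v‖ = 1 := by
      rw [hv, norm_smul, norm_inv, norm_norm, ← hc, inv_mul_cancel₀ hcpos.ne']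
    have key := hy v hvnorm
    have hsupp : ∀ ω, suppFn (Γ '' X ω) w = (c : EReal) * suppFn (X ω) v := by
      intro ω
      rw [suppFn_image, ← hA]
      have : A w = c • v := by rw [hv, smul_smul, mul_inv_cancel₀ hcpos.ne', one_smul]
      rw [this, suppFn_smul _ _ hcpos]
    have hginner : (fun ω => suppFn (Γ '' X ω) w)
        = fun ω => (c : EReal) * suppFn (X ω) v := funext hsupp
    rw [hginner, hg c hcpos]
    have hinner : ⟪Γ y, w⟫ = c * ⟪y, v⟫ := by
      calc ⟪Γ y, w⟫ = ⟪y, A w⟫ := by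
            rw [hA, LinearMap.adjoint_inner_right]; rfl
        _ = ⟪y, c • v⟫ := by rw [hv, smul_smul, mul_inv_cancel₀ hcpos.ne', one_smul]
        _ = c * ⟪y, v⟫ := real_inner_smul_right _ _ _
    rw [hinner, EReal.coe_mul]
    exact (ereal_mul_le_mul_left_iff c hcpos _ _).2 key
end

section
/- Theorem 4.3 (G5), unconditional form (translation equivariance of the set-valued gauge): Let E be a finite-dimensional real inner product space, (Ω, μ) a probability space, and g : (Ω → EReal) → EReal translation equivariant, i.e. g (fun ω => f ω + (c : EReal)) = g f + (c : EReal) for every c ∈ ℝ and every f : Ω → EReal. Then for every set-valued map X : Ω → Set E and every z ∈ E, G(fun ω => (fun x => x + z) '' (X ω)) = (fun x => x + z) '' G(X), i.e. translating the random set by a deterministic vector z translates its set-valued gauge by z. -/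
open MeasureTheory RealInnerProductSpace

/-- Adding a real constant is an order isomorphism of `EReal`. -/
noncomputable def ERealAddRightOrderIso (c : ℝ) : EReal ≃o EReal where
  toFun x := x + c
  invFun x := x - c
  left_inv x := EReal.add_sub_cancel_right
  right_inv x := EReal.sub_add_cancel
  map_rel_iff' := (EReal.addLECancellable_coe c).add_le_add_iff_right

lemma EReal.biSup_add_coe {E : Type*} (A : Set E) (f : E → EReal) (c : ℝ) :
    (⨆ x ∈ A, (f x + (c : EReal))) = (⨆ x ∈ A, f x) + (c : EReal) := by
  have h := (map_iSup₂ (ERealAddRightOrderIso c) (fun x (_ : x ∈ A) => f x)).symm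
  simp only [ERealAddRightOrderIso, RelIso.coe_fn_mk, Equiv.coe_fn_mk] at h
  exact h

lemma suppFn_translate {E : Type*} [NormedAddCommGroup E] [InnerProductSpace ℝ E]
    (A : Set E) (w z : E) :
    suppFn ((fun x => x + z) '' A) w = suppFn A w + ((⟪z, w⟫ : ℝ) : EReal) := by
  unfold suppFn
  rw [iSup_image]
  simp_rw [inner_add_left, EReal.coe_add]
  exact EReal.biSup_add_coe A _ _

/-- Theorem 4.3 (G5), unconditional form: for a translation equivariant functional `g`,
translating the random set by a deterministic vector translates its set-valued gauge. -/
theorem gaugeSet_translation_equivariant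
    {E : Type*} [NormedAddCommGroup E] [InnerProductSpace ℝ E] [FiniteDimensional ℝ E]
    {Ω : Type*} [MeasurableSpace Ω] (μ : Measure Ω) [IsProbabilityMeasure μ]
    (g : (Ω → EReal) → EReal)
    (hg : ∀ (c : ℝ) (f : Ω → EReal),
      g (fun ω => f ω + (c : EReal)) = g f + (c : EReal))
    (X : Ω → Set E) (z : E) :
    gaugeSet g (fun ω => (fun x => x + z) '' (X ω))
      = (fun x => x + z) '' gaugeSet g X := by
  ext x
  have key : ∀ w : E, (fun ω => suppFn ((fun x => x + z) '' (X ω)) w)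
      = fun ω => suppFn (X ω) w + ((⟪z, w⟫ : ℝ) : EReal) := by
    intro w; funext ω; exact suppFn_translate (X ω) w z
  constructor
  · intro hx
    refine ⟨x - z, ?_, by simp⟩
    simp only [gaugeSet, Set.mem_iInter, Set.mem_setOf_eq] at hx ⊢
    intro w hw
    have h := hx w hw
    rw [key w, hg] at h
    have : ((⟪x - z, w⟫ : ℝ) : EReal) + ((⟪z, w⟫ : ℝ) : EReal)
        ≤ g (fun ω => suppFn (X ω) w) + ((⟪z, w⟫ : ℝ) : EReal) := by
      rw [← EReal.coe_add, ← inner_add_left]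
      simpa using h
    exact ((EReal.addLECancellable_coe _).add_le_add_iff_right).1 this
  · rintro ⟨y, hy, rfl⟩
    simp only [gaugeSet, Set.mem_iInter, Set.mem_setOf_eq] at hy ⊢
    intro w hw
    rw [key w, hg, inner_add_left, EReal.coe_add]
    exact add_le_add_left (hy w hw) _
end

section
/- Proposition 4.4, unconditional form (superadditivity of the set-valued gauge): Let E be a finite-dimensional real inner product space, (Ω, μ) a probability space, and g : (Ω → EReal) → EReal superadditive in the sense that g (f + f') ≥ g f + g f' for all f, f' : Ω → EReal with f ω > ⊥ and f' ω > ⊥ for all ω, whenever the sum g f + g f' is well defined (not of the form ⊥ + ⊤ or ⊤ + ⊥). Let X', X'' : Ω → Set E be set-valued maps with X' ω and X'' ω nonempty for all ω, and define their Minkowski sum pointwise: (X' + X'') ω := {x' + x'' | x' ∈ X' ω, x'' ∈ X'' ω}. Then G(X') + G(X'') ⊆ G(X' + X''), where the left-hand side is the Minkowski sum of the two set-valued gauges. -/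
open MeasureTheory RealInnerProductSpace Pointwise

lemma suppFn_mem_le {E : Type*} [NormedAddCommGroup E] [InnerProductSpace ℝ E]
    {A : Set E} {a : E} (ha : a ∈ A) (w : E) :
    ((⟪a, w⟫ : ℝ) : EReal) ≤ suppFn A w :=
  le_iSup₂_of_le a ha le_rfl

lemma suppFn_add {E : Type*} [NormedAddCommGroup E] [InnerProductSpace ℝ E]
    (A B : Set E) (hA : A.Nonempty) (hB : B.Nonempty) (w : E) :
    suppFn (A + B) w = suppFn A w + suppFn B w := by
  apply le_antisymm
  · refine iSup₂_le fun x hx => ?_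
    obtain ⟨a, ha, b, hb, rfl⟩ := hx
    have : ((⟪a + b, w⟫ : ℝ) : EReal) = ((⟪a, w⟫ : ℝ) : EReal) + ((⟪b, w⟫ : ℝ) : EReal) := by
      rw [inner_add_left]; exact_mod_cast rfl
    rw [this]
    exact add_le_add (suppFn_mem_le ha w) (suppFn_mem_le hb w)
  · refine EReal.add_le_of_forall_lt fun a' ha' b' hb' => ?_
    simp only [suppFn, lt_iSup_iff] at ha' hb'
    obtain ⟨a, ha, haa⟩ := ha'
    obtain ⟨b, hb, hbb⟩ := hb'
    calc a' + b' ≤ ((⟪a, w⟫ : ℝ) : EReal) + ((⟪b, w⟫ : ℝ) : EReal) :=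
          add_le_add haa.le hbb.le
      _ = ((⟪a + b, w⟫ : ℝ) : EReal) := by rw [inner_add_left]; exact_mod_cast rfl
      _ ≤ suppFn (A + B) w := suppFn_mem_le (Set.add_mem_add ha hb) w

/-- Proposition 4.4, unconditional form: for a superadditive functional `g`, the
Minkowski sum of the set-valued gauges is contained in the set-valued gauge of the
Minkowski sum. -/
theorem gaugeSet_superadditive
    {E : Type*} [NormedAddCommGroup E] [InnerProductSpace ℝ E] [FiniteDimensional ℝ E]
    {Ω : Type*} [MeasurableSpace Ω] (μ : Measure Ω) [IsProbabilityMeasure μ]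
    (g : (Ω → EReal) → EReal)
    (hg : ∀ f f' : Ω → EReal, (∀ ω, ⊥ < f ω) → (∀ ω, ⊥ < f' ω) →
      ¬(g f = ⊥ ∧ g f' = ⊤) → ¬(g f = ⊤ ∧ g f' = ⊥) →
      g f + g f' ≤ g (f + f'))
    (X' X'' : Ω → Set E)
    (hX' : ∀ ω, (X' ω).Nonempty) (hX'' : ∀ ω, (X'' ω).Nonempty) :
    gaugeSet g X' + gaugeSet g X'' ⊆ gaugeSet g (fun ω => X' ω + X'' ω) := by
  rintro x ⟨x', hx', x'', hx'', rfl⟩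
  simp only [gaugeSet, Set.mem_iInter, Set.mem_setOf_eq] at hx' hx'' ⊢
  intro w hw
  set f : Ω → EReal := fun ω => suppFn (X' ω) w with hf
  set f' : Ω → EReal := fun ω => suppFn (X'' ω) w with hf'
  have h1 : ((⟪x', w⟫ : ℝ) : EReal) ≤ g f := hx' w hw
  have h2 : ((⟪x'', w⟫ : ℝ) : EReal) ≤ g f' := hx'' w hw
  have hbot : ∀ ω, ⊥ < f ω := fun ω => by
    obtain ⟨a, ha⟩ := hX' ω
    exact lt_of_lt_of_le (EReal.bot_lt_coe _) (suppFn_mem_le ha w)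
  have hbot' : ∀ ω, ⊥ < f' ω := fun ω => by
    obtain ⟨a, ha⟩ := hX'' ω
    exact lt_of_lt_of_le (EReal.bot_lt_coe _) (suppFn_mem_le ha w)
  have hne : g f ≠ ⊥ := fun h => by simp [h] at h1
  have hne' : g f' ≠ ⊥ := fun h => by simp [h] at h2
  have key : g f + g f' ≤ g (f + f') :=
    hg f f' hbot hbot' (fun h => hne h.1) (fun h => hne' h.2)
  have heq : (f + f') = fun ω => suppFn (X' ω + X'' ω) w := by
    funext ω
    exact (suppFn_add (X' ω) (X'' ω) (hX' ω) (hX'' ω) w).symm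
  calc ((⟪x' + x'', w⟫ : ℝ) : EReal)
      = ((⟪x', w⟫ : ℝ) : EReal) + ((⟪x'', w⟫ : ℝ) : EReal) := by
        rw [inner_add_left]; exact_mod_cast rfl
    _ ≤ g f + g f' := add_le_add h1 h2
    _ ≤ g (f + f') := key
    _ = _ := by rw [heq]
end

section
/- Half-space representation of a compact convex set plus a cone (deterministic core of Proposition 7.1): Let E be a finite-dimensional real inner product space, K ⊆ E a nonempty compact convex set, and C ⊆ E a closed convex cone. Then ⋂_{w ∈ Cᵒ} {x ∈ E : ⟪x, w⟫ ≤ hK w} = K + C, where hK w := sSup {⟪x, w⟫ | x ∈ K} is the (real-valued) support function of K, Cᵒ := {w ∈ E : ∀ c ∈ C, ⟪w, c⟫ ≤ 0} is the polar cone of C, and K + C is the Minkowski sum {k + c | k ∈ K, c ∈ C}. -/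
open RealInnerProductSpace Pointwise

/-- The real-valued support function of a (nonempty compact) set. -/
noncomputable def suppR {E : Type*} [NormedAddCommGroup E] [InnerProductSpace ℝ E]
    (K : Set E) (w : E) : ℝ :=
  sSup ((fun x => (⟪x, w⟫ : ℝ)) '' K)

/-- Half-space representation of a compact convex set plus a closed convex cone:
the intersection, over directions `w` in the polar cone of `C`, of the half-spaces
`{x : ⟪x, w⟫ ≤ h_K(w)}` equals the Minkowski sum `K + C`. -/
theorem halfspace_inter_polar_eq_add_cone
    {E : Type*} [NormedAddCommGroup E] [InnerProductSpace ℝ E] [FiniteDimensional ℝ E]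
    (K : Set E) (hKne : K.Nonempty) (hKcomp : IsCompact K) (hKconv : Convex ℝ K)
    (C : Set E) (hCcl : IsClosed C) (hCconv : Convex ℝ C) (hCne : C.Nonempty)
    (hCcone : ∀ (c : ℝ), 0 < c → ∀ x ∈ C, c • x ∈ C) :
    (⋂ w ∈ {w : E | ∀ c ∈ C, (⟪w, c⟫ : ℝ) ≤ 0}, {x : E | ⟪x, w⟫ ≤ suppR K w})
      = K + C := by
  -- 0 ∈ C
  obtain ⟨c₀, hc₀⟩ := hCne
  have h0C : (0 : E) ∈ C := by
    have : Filter.Tendsto (fun n : ℕ => ((n : ℝ) + 1)⁻¹ • c₀) Filter.atTop (nhds 0) := by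
      have h1 : Filter.Tendsto (fun n : ℕ => ((n : ℝ) + 1)⁻¹) Filter.atTop (nhds 0) :=
        tendsto_one_div_add_atTop_nhds_zero_nat.congr (fun n => by rw [one_div])
      simpa using h1.smul_const c₀
    have hmem : ∀ n : ℕ, ((n : ℝ) + 1)⁻¹ • c₀ ∈ C := fun n =>
      hCcone _ (by positivity) _ hc₀
    exact hCcl.mem_of_tendsto this (Filter.Eventually.of_forall hmem)
  -- bounds on support function
  have hbdd : ∀ w : E, BddAbove ((fun x => (⟪x, w⟫ : ℝ)) '' K) := fun w =>
    (hKcomp.image (continuous_id.inner continuous_const)).bddAbove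
  have hle : ∀ w : E, ∀ k ∈ K, (⟪k, w⟫ : ℝ) ≤ suppR K w := fun w k hk =>
    le_csSup (hbdd w) ⟨k, hk, rfl⟩
  apply Set.Subset.antisymm
  · intro x hx
    by_contra hxKC
    have hKCcl : IsClosed (K + C) := hCcl.add_left_of_isCompact hKcomp
    have hKCconv : Convex ℝ (K + C) := hKconv.add hCconv
    obtain ⟨f, u, hfu, hux⟩ := geometric_hahn_banach_closed_point hKCconv hKCcl hxKC
    set w := (InnerProductSpace.toDual ℝ E).symm f with hw
    have hfw : ∀ y : E, f y = ⟪y, w⟫ := by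
      intro y
      rw [real_inner_comm]
      simp [hw, ← InnerProductSpace.toDual_apply_apply]
    have hwpolar : ∀ c ∈ C, (⟪w, c⟫ : ℝ) ≤ 0 := by
      intro c hc
      by_contra hpos
      push_neg at hpos
      obtain ⟨k₀, hk₀⟩ := hKne
      set t : ℝ := (u - f k₀ + 1) / ⟪w, c⟫ with ht
      have hfk₀ : f k₀ < u := hfu k₀ (by exact ⟨k₀, hk₀, 0, h0C, by simp⟩)
      have htpos : 0 < t := div_pos (by linarith) hpos
      have hmem : k₀ + t • c ∈ K + C := ⟨k₀, hk₀, t • c, hCcone t htpos c hc, rfl⟩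
      have := hfu _ hmem
      rw [map_add, map_smul] at this
      have hfc : f c = ⟪w, c⟫ := by rw [hfw, real_inner_comm]
      rw [smul_eq_mul, hfc, ht, div_mul_cancel₀ _ (ne_of_gt hpos)] at this
      linarith
    have hxle : (⟪x, w⟫ : ℝ) ≤ suppR K w := by
      have := Set.mem_iInter₂.mp hx w hwpolar
      exact this
    have hsupp : suppR K w ≤ u := by
      apply csSup_le (hKne.image _)
      rintro r ⟨k, hk, rfl⟩
      show (⟪k, w⟫ : ℝ) ≤ u
      rw [← hfw]
      exact le_of_lt (hfu k ⟨k, hk, 0, h0C, by simp⟩)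
    have : u < ⟪x, w⟫ := by rw [← hfw]; exact hux
    linarith
  · rintro x ⟨k, hk, c, hc, rfl⟩
    apply Set.mem_iInter₂.mpr
    intro w hw
    have h1 : (⟪c, w⟫ : ℝ) ≤ 0 := by rw [real_inner_comm]; exact hw c hc
    have : (⟪k + c, w⟫ : ℝ) = ⟪k, w⟫ + ⟪c, w⟫ := inner_add_left _ _ _
    simp only [Set.mem_setOf_eq, this]
    have := hle w k hk
    linarith
end

section
/- Proposition 7.1, unconditional form (sublinear gauge of a randomly translated deterministic cone): Let E be a finite-dimensional real inner product space, (Ω, μ) a probability space, X : Ω → E a map, and C ⊆ E a closed convex cone. Let g : (Ω → ℝ) → ℝ be subadditive (g (f + f') ≤ g f + g f') and positively homogeneous (g (c • f) = c * g f for all real c ≥ 0), and define φ : E → ℝ by φ w := g (fun ω => ⟪X ω, w⟫). Then ⋂_{w ∈ Cᵒ} {x ∈ E : ⟪x, w⟫ ≤ φ w} = K + C, where K := ⋂_{w ∈ E} {x ∈ E : ⟪x, w⟫ ≤ φ w} is the set-valued gauge G({X}) of the singleton, Cᵒ := {w ∈ E : ∀ c ∈ C, ⟪w, c⟫ ≤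 0} is the polar cone, and K + C is the Minkowski sum. In particular K is nonempty and compact, and the set-valued gauge of the random translate X + C of the cone C equals G({X}) + C. -/
open MeasureTheory RealInnerProductSpace Pointwise

/-- Proposition 7.1, unconditional form: for a sublinear gauge `g`, the set-valued
gauge of the randomly translated cone `X + C` (given by intersecting half-spaces over
directions in the polar cone) equals `G({X}) + C`, where the set-valued gauge `K = G({X})`
of the singleton is nonempty and compact. -/
theorem gaugeSet_translate_cone
    {E : Type*} [NormedAddCommGroup E] [InnerProductSpace ℝ E] [FiniteDimensional ℝ E]
    {Ω : Type*} [MeasurableSpace Ω] (μ : Measure Ω) [IsProbabilityMeasure μ]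
    (X : Ω → E)
    (C : Set E) (hCcl : IsClosed C) (hCconv : Convex ℝ C) (hCne : C.Nonempty)
    (hCcone : ∀ (c : ℝ), 0 < c → ∀ x ∈ C, c • x ∈ C)
    (g : (Ω → ℝ) → ℝ)
    (hsub : ∀ f f' : Ω → ℝ, g (f + f') ≤ g f + g f')
    (hhom : ∀ (c : ℝ), 0 ≤ c → ∀ f : Ω → ℝ, g (c • f) = c * g f)
    (φ : E → ℝ) (hφ : ∀ w, φ w = g (fun ω => (⟪X ω, w⟫ : ℝ)))
    (K : Set E) (hK : K = ⋂ w : E, {x : E | ⟪x, w⟫ ≤ φ w}) :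
    K.Nonempty ∧ IsCompact K ∧
      (⋂ w ∈ {w : E | ∀ c ∈ C, (⟪w, c⟫ : ℝ) ≤ 0}, {x : E | ⟪x, w⟫ ≤ φ w}) = K + C := by
  -- sublinearity of φ
  have hφadd : ∀ w w' : E, φ (w + w') ≤ φ w + φ w' := by
    intro w w'
    rw [hφ, hφ, hφ]
    have h : (fun ω => (⟪X ω, w + w'⟫ : ℝ))
        = (fun ω => (⟪X ω, w⟫ : ℝ)) + (fun ω => (⟪X ω, w'⟫ : ℝ)) := by
      funext ω; simp [inner_add_right]
    rw [h]; exact hsub _ _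
  have hφsmul : ∀ c : ℝ, 0 ≤ c → ∀ w : E, φ (c • w) = c * φ w := by
    intro c hc w
    rw [hφ, hφ]
    have h : (fun ω => (⟪X ω, c • w⟫ : ℝ)) = c • (fun ω => (⟪X ω, w⟫ : ℝ)) := by
      funext ω; simp [inner_smul_right]
    rw [h]; exact hhom c hc _
  have hφ0 : φ 0 = 0 := by
    have := hφsmul 0 le_rfl 0
    simpa using this
  -- key Hahn-Banach step: support function of K equals φ
  have key : ∀ w : E, ∃ k ∈ K, (⟪k, w⟫ : ℝ) = φ w := by
    intro w
    have H : ∀ c : ℝ, c • w = 0 → c • (φ w) = 0 := by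
      intro c hc
      by_cases hw : w = 0
      · rw [hw, hφ0]; simp
      · rcases smul_eq_zero.1 hc with h | h
        · rw [h]; simp
        · exact absurd h hw
    set f : E →ₗ.[ℝ] ℝ := LinearPMap.mkSpanSingleton' w (φ w) H with hf_def
    have hfle : ∀ x : f.domain, f x ≤ φ x := by
      rintro ⟨x, hx⟩
      have hx' : x ∈ Submodule.span ℝ {w} := hx
      rcases Submodule.mem_span_singleton.1 hx' with ⟨c, hc⟩
      have hxeq : (⟨x, hx⟩ : f.domain) = ⟨c • w, hc ▸ hx⟩ := Subtype.ext hc.symm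
      rw [hxeq]
      have happ : f ⟨c • w, hc ▸ hx⟩ = c • (φ w) :=
        LinearPMap.mkSpanSingleton'_apply w (φ w) H c _
      rw [happ]
      rcases le_or_gt 0 c with h0 | h0
      · rw [hφsmul c h0 w]; simp [smul_eq_mul]
      · -- c < 0 : c * φ w ≤ φ (c • w)
        have h1 : φ (c • w) + φ (-(c • w)) ≥ 0 := by
          have := hφadd (c • w) (-(c • w))
          simp only [add_neg_cancel, hφ0] at this
          linarith
        have h2 : φ (-(c • w)) = (-c) * φ w := by
          have : -(c • w) = (-c) • w := by simp
          rw [this, hφsmul (-c) (by linarith) w]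
        simp only [smul_eq_mul]
        linarith
    obtain ⟨L, hL1, hL2⟩ := exists_extension_of_le_sublinear f φ
      (fun c hc x => hφsmul c hc.le x) hφadd hfle
    have hwmem : w ∈ f.domain := by
      rw [hf_def, LinearPMap.domain_mkSpanSingleton]
      exact Submodule.mem_span_singleton_self w
    have hLw : L w = φ w := by
      have := hL1 ⟨w, hwmem⟩
      rw [this]
      exact LinearPMap.mkSpanSingleton'_apply_self w (φ w) H _
    set Lc : E →L[ℝ] ℝ := LinearMap.toContinuousLinearMap L with hLc
    set k : E := (InnerProductSpace.toDual ℝ E).symm Lc with hk_def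
    have hkinner : ∀ y : E, (⟪k, y⟫ : ℝ) = L y := fun y =>
      InnerProductSpace.toDual_symm_apply
    refine ⟨k, ?_, by rw [hkinner w, hLw]⟩
    rw [hK]
    exact Set.mem_iInter.2 fun y => by
      simp only [Set.mem_setOf_eq, hkinner y]; exact hL2 y
  -- K nonempty
  obtain ⟨k₀, hk₀K, _⟩ := key 0
  have hKne : K.Nonempty := ⟨k₀, hk₀K⟩
  -- K closed
  have hKcl : IsClosed K := by
    rw [hK]
    exact isClosed_iInter fun w =>
      isClosed_le (Continuous.inner continuous_id continuous_const) continuous_const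
  -- K bounded via orthonormal basis
  have hKcpt : IsCompact K := by
    set b := stdOrthonormalBasis ℝ E
    set M : ℝ := ∑ i, max (φ (b i)) (φ (-(b i))) with hM
    have hbound : ∀ x ∈ K, ‖x‖ ≤ M := by
      intro x hx
      rw [hK] at hx
      have hx' : ∀ w : E, (⟪x, w⟫ : ℝ) ≤ φ w := fun w => Set.mem_iInter.1 hx w
      have hrepr : x = ∑ i, (⟪x, b i⟫ : ℝ) • b i := by
        have := b.sum_repr' x
        simpa [real_inner_comm] using this.symm
      calc ‖x‖ = ‖∑ i, (⟪x, b i⟫ : ℝ) • b i‖ := by rw [← hrepr]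
        _ ≤ ∑ i, ‖(⟪x, b i⟫ : ℝ) • b i‖ := norm_sum_le _ _
        _ ≤ M := by
            rw [hM]
            apply Finset.sum_le_sum
            intro i _
            rw [norm_smul, b.orthonormal.1 i, mul_one]
            rw [Real.norm_eq_abs, abs_le]
            constructor
            · have := hx' (-(b i))
              rw [inner_neg_right] at this
              have : -(φ (-(b i))) ≤ (⟪x, b i⟫ : ℝ) := by linarith
              have h2 : φ (-(b i)) ≤ max (φ (b i)) (φ (-(b i))) := le_max_right _ _
              linarith
            · exact (hx' (b i)).trans (le_max_left _ _)
    apply Metric.isCompact_of_isClosed_isBounded hKcl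
    exact isBounded_iff_forall_norm_le.2 ⟨M, hbound⟩
  -- K convex
  have hKconv : Convex ℝ K := by
    rw [hK]
    exact convex_iInter fun w => convex_halfSpace_le
      ⟨fun a b => inner_add_left a b w, fun c a => real_inner_smul_left a w c⟩ (φ w)
  refine ⟨hKne, hKcpt, ?_⟩
  apply Set.Subset.antisymm
  · -- hard direction via separation
    intro x hx
    by_contra hxn
    have hScl : IsClosed (K + C) := hCcl.add_left_of_isCompact hKcpt
    have hSconv : Convex ℝ (K + C) := hKconv.add hCconv
    obtain ⟨L, u, hLu, hux⟩ := geometric_hahn_banach_closed_point hSconv hScl hxn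
    set w : E := (InnerProductSpace.toDual ℝ E).symm L with hw_def
    have hwinner : ∀ y : E, (⟪w, y⟫ : ℝ) = L y := fun y =>
      InnerProductSpace.toDual_symm_apply
    -- w is in the polar cone
    have hwpolar : ∀ c ∈ C, (⟪w, c⟫ : ℝ) ≤ 0 := by
      intro c hc
      rw [hwinner c]
      by_contra h
      push_neg at h
      have hmem : ∀ t : ℝ, 0 < t → k₀ + t • c ∈ K + C :=
        fun t ht => Set.add_mem_add hk₀K (hCcone t ht c hc)
      have h1 : L k₀ + L c < u := by
        have := hLu _ (hmem 1 one_pos)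
        simpa using this
      have hk₀u : L k₀ < u := by nlinarith
      set t : ℝ := (u - L k₀ + 1) / L c with ht_def
      have htpos : 0 < t := div_pos (by linarith) h
      have := hLu _ (hmem t htpos)
      rw [map_add, L.map_smul, smul_eq_mul, ht_def, div_mul_cancel₀ _ (ne_of_gt h)] at this
      linarith
    -- from hx : ⟪x, w⟫ ≤ φ w
    have hxw : (⟪x, w⟫ : ℝ) ≤ φ w := by
      have := Set.mem_iInter₂.1 hx w hwpolar
      exact this
    obtain ⟨k₁, hk₁K, hk₁w⟩ := key w
    -- L k₁ ≤ u (limit argument using small elements of C)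
    obtain ⟨c₀, hc₀⟩ := hCne
    have hc₀le : L c₀ ≤ 0 := by rw [← hwinner c₀]; exact hwpolar c₀ hc₀
    have hk₁u : L k₁ ≤ u := by
      have hsmall : ∀ ε : ℝ, 0 < ε → L k₁ + ε * L c₀ < u := by
        intro ε hε
        have := hLu _ (Set.add_mem_add hk₁K (hCcone ε hε c₀ hc₀))
        simpa [smul_eq_mul] using this
      apply le_of_forall_pos_lt_add
      intro η hη
      rcases eq_or_lt_of_le hc₀le with h0 | h0
      · have := hsmall 1 one_pos
        rw [h0] at this
        linarith
      · have h0' : L c₀ < 0 := h0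
        have := hsmall (η / (-L c₀)) (div_pos hη (by linarith))
        have heq : η / (-L c₀) * L c₀ = -η := by
          rw [div_mul_eq_mul_div, mul_div_assoc, div_neg, div_self (ne_of_lt h0'), mul_neg,
            mul_one]
        linarith [heq ▸ this]
    -- contradiction
    have hLx : L x ≤ φ w := by rw [← hwinner x, real_inner_comm]; exact hxw
    have hLk₁ : L k₁ = φ w := by rw [← hwinner k₁, real_inner_comm]; exact hk₁w
    linarith
  · -- easy direction
    rintro x ⟨k, hkK, c, hcC, rfl⟩
    apply Set.mem_iInter₂.2
    intro w hw
    simp only [Set.mem_setOf_eq, inner_add_left]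
    have h1 : (⟪k, w⟫ : ℝ) ≤ φ w := by
      rw [hK] at hkK
      exact Set.mem_iInter.1 hkK w
    have h2 : (⟪c, w⟫ : ℝ) ≤ 0 := by rw [real_inner_comm]; exact hw c hcC
    linarith
end

section
/- Proposition 7.2, unconditional form (gauge of a random cone): Let E be a finite-dimensional real inner product space, (Ω, μ) a probability space, and C : Ω → Set E a set-valued map such that C ω is a closed convex cone containing 0 for every ω, and such that {ω : w ∈ (C ω)ᵒ} is μ-measurable for every w ∈ E. Let g : (Ω → EReal) → EReal satisfy: (a) g f = 0 for every f : Ω → EReal with f = 0 μ-almost everywhere, and (b) g f = ⊤ for every measurable f : Ω → EReal with μ {ω : f ω = ⊤} > 0 (sensitivity with respect to infinity). Then G(C) = Mᵒ, where M := {w ∈ E : μ {ω : w ∈ (C ω)ᵒ} = 1} is the set of fixed points of the polar cone Cᵒ and Mᵒ := {x ∈ E : ∀ w ∈ M, ⟪x, w⟫ ≤ 0}. -/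
open MeasureTheory RealInnerProductSpace

/-- Proposition 7.2, unconditional form: for a gauge `g` vanishing on a.e. zero
functions and sensitive with respect to infinity, the set-valued gauge of a random
closed convex cone `C` is the polar cone of the set of fixed points of the polar
cone of `C`. -/
theorem gaugeSet_random_cone
    {E : Type*} [NormedAddCommGroup E] [InnerProductSpace ℝ E] [FiniteDimensional ℝ E]
    {Ω : Type*} [MeasurableSpace Ω] (μ : Measure Ω) [IsProbabilityMeasure μ]
    (C : Ω → Set E)
    (hCcl : ∀ ω, IsClosed (C ω)) (hCconv : ∀ ω, Convex ℝ (C ω))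
    (hC0 : ∀ ω, (0 : E) ∈ C ω)
    (hCcone : ∀ ω, ∀ (c : ℝ), 0 < c → ∀ x ∈ C ω, c • x ∈ C ω)
    (hmeas : ∀ w : E, MeasurableSet {ω | ∀ c ∈ C ω, (⟪w, c⟫ : ℝ) ≤ 0})
    (g : (Ω → EReal) → EReal)
    (ha : ∀ f : Ω → EReal, (∀ᵐ ω ∂μ, f ω = 0) → g f = 0)
    (hb : ∀ f : Ω → EReal, Measurable f → 0 < μ {ω | f ω = ⊤} → g f = ⊤) :
    gaugeSet g C
      = {x : E | ∀ w ∈ {w : E | μ {ω | ∀ c ∈ C ω, (⟪w, c⟫ : ℝ) ≤ 0} = 1},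
          (⟪x, w⟫ : ℝ) ≤ 0} := by
  classical
  set S : E → Set Ω := fun w => {ω | ∀ c ∈ C ω, (⟪w, c⟫ : ℝ) ≤ 0} with hSdef
  -- pointwise value of the support function
  have hsupp : ∀ (w : E) (ω : Ω), suppFn (C ω) w = if ω ∈ S w then 0 else ⊤ := by
    intro w ω
    by_cases h : ω ∈ S w
    · rw [if_pos h]
      refine le_antisymm (iSup₂_le fun c hc => ?_) ?_
      · have := h c hc
        rw [real_inner_comm] at this
        exact_mod_cast this
      · have h0 := le_iSup₂ (f := fun (x : E) (_ : x ∈ C ω) => ((⟪x, w⟫ : ℝ) : EReal))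
          0 (hC0 ω)
        simpa [suppFn] using h0
    · rw [if_neg h]
      simp only [hSdef, Set.mem_setOf_eq, not_forall] at h
      obtain ⟨c, hc, hpos⟩ := h
      push_neg at hpos
      rw [real_inner_comm] at hpos
      rw [EReal.eq_top_iff_forall_lt]
      intro r
      set t : ℝ := max 1 ((r + 1) / ⟪c, w⟫) with ht
      have ht0 : 0 < t := lt_max_of_lt_left one_pos
      have htc : t • c ∈ C ω := hCcone ω t ht0 c hc
      have hval : (⟪t • c, w⟫ : ℝ) = t * ⟪c, w⟫ := real_inner_smul_left c w t
      have hge : r < ⟪t • c, w⟫ := by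
        rw [hval]
        have : (r + 1) / ⟪c, w⟫ * ⟪c, w⟫ = r + 1 := div_mul_cancel₀ _ (ne_of_gt hpos)
        calc r < r + 1 := lt_add_one r
          _ = (r + 1) / ⟪c, w⟫ * ⟪c, w⟫ := this.symm
          _ ≤ t * ⟪c, w⟫ := by
              exact mul_le_mul_of_nonneg_right (le_max_right _ _) hpos.le
      calc (r : EReal) < ((⟪t • c, w⟫ : ℝ) : EReal) := by exact_mod_cast hge
        _ ≤ suppFn (C ω) w := le_iSup₂ (f := fun (x : E) (_ : x ∈ C ω) =>
            ((⟪x, w⟫ : ℝ) : EReal)) (t • c) htc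
  -- value of g on the support function family
  have hg : ∀ w : E, g (fun ω => suppFn (C ω) w) = if μ (S w) = 1 then 0 else ⊤ := by
    intro w
    by_cases h1 : μ (S w) = 1
    · rw [if_pos h1]
      apply ha
      have : ∀ᵐ ω ∂μ, ω ∈ S w := by
        rw [ae_iff]
        have := prob_compl_eq_zero_iff (μ := μ) (hmeas w)
        exact this.mpr h1
      filter_upwards [this] with ω hω
      rw [hsupp w ω, if_pos hω]
    · rw [if_neg h1]
      apply hb
      · have : (fun ω => suppFn (C ω) w) = (S w).piecewise (fun _ => 0) (fun _ => ⊤) := by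
          funext ω
          rw [hsupp w ω]
          by_cases h : ω ∈ S w
          · rw [if_pos h, Set.piecewise_eq_of_mem _ _ _ h]
          · rw [if_neg h, Set.piecewise_eq_of_notMem _ _ _ h]
        rw [this]
        exact Measurable.piecewise (hmeas w) measurable_const measurable_const
      · have hset : {ω | suppFn (C ω) w = ⊤} = (S w)ᶜ := by
          ext ω
          simp only [Set.mem_setOf_eq, Set.mem_compl_iff, hsupp w ω]
          by_cases h : ω ∈ S w
          · simp [h]
          · simp [h]
        rw [hset]
        rw [pos_iff_ne_zero]
        intro hc
        exact h1 ((prob_compl_eq_zero_iff (μ := μ) (hmeas w)).mp hc)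
  -- S is invariant under positive scaling
  have hSscale : ∀ (w : E) (t : ℝ), 0 < t → S (t • w) = S w := by
    intro w t htpos
    ext ω
    simp only [hSdef, Set.mem_setOf_eq]
    constructor
    · intro h c hc
      have htc := h c hc
      rw [real_inner_smul_left] at htc
      exact le_of_not_gt fun hlt => absurd htc (not_le.mpr (mul_pos htpos hlt))
    · intro h c hc
      rw [real_inner_smul_left]
      exact mul_nonpos_of_nonneg_of_nonpos htpos.le (h c hc)
  ext x
  simp only [gaugeSet, Set.mem_iInter, Set.mem_setOf_eq, Metric.mem_sphere,
    dist_zero_right]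
  constructor
  · intro hx w hw
    by_cases hw0 : w = 0
    · simp [hw0]
    · have hnorm : ‖w‖ ≠ 0 := norm_ne_zero_iff.mpr hw0
      have hnpos : 0 < ‖w‖ := norm_pos_iff.mpr hw0
      set u : E := ‖w‖⁻¹ • w with hu
      have hu1 : ‖u‖ = 1 := by
        rw [hu, norm_smul, norm_inv, norm_norm, inv_mul_cancel₀ hnorm]
      have hSu : μ (S u) = 1 := by
        rw [hu, hSscale w ‖w‖⁻¹ (inv_pos.mpr hnpos)]
        exact hw
      have := hx u hu1
      rw [hg u, if_pos hSu] at this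
      have hle : (⟪x, u⟫ : ℝ) ≤ 0 := by exact_mod_cast this
      rw [hu, real_inner_smul_right] at hle
      exact le_of_not_gt fun hlt => absurd hle
        (not_le.mpr (mul_pos (inv_pos.mpr hnpos) hlt))
  · intro hx w hw
    rw [hg w]
    by_cases h1 : μ (S w) = 1
    · rw [if_pos h1]
      exact_mod_cast hx w h1
    · rw [if_neg h1]
      exact le_top
end
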